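/- Let c ≥ 0 be a real number and q a positive integer. Suppose (e_n)_{n≥q} is a sequence of real numbers satisfying e_n ≤ c + (1/n) · Σ_{u=q}^{n-1} e_u for all n ≥ q (where the empty sum for n = q is 0). Then e_n ≤ c · log(e·n/q) for all n ≥ q. -/

import Mathlib

lemma aux_log (n : ℕ) (hn : 1 ≤ n) :
    (1:ℝ) ≤ ((n:ℝ)+1) * Real.log (((n:ℝ)+1)/n) := by
  have hn' : (0:ℝ) < n := by exact_mod_cast hn
  have h := Real.log_le_sub_one_of_pos (x := (n:ℝ)/((n:ℝ)+1)) (by positivity)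
  have hlog : Real.log (((n:ℝ)+1)/n) = - Real.log ((n:ℝ)/((n:ℝ)+1)) := by
    rw [← Real.log_inv]; congr 1; field_simp
  rw [hlog]
  have h1 : (0:ℝ) < (n:ℝ)+1 := by positivity
  have h2 : (n:ℝ)/((n:ℝ)+1) - 1 = -1/((n:ℝ)+1) := by field_simp; ring
  have h2' : (-1:ℝ)/((n:ℝ)+1) = -((1:ℝ)/((n:ℝ)+1)) := neg_div _ _
  have h3 : (1:ℝ)/((n:ℝ)+1) ≤ -Real.log ((n:ℝ)/((n:ℝ)+1)) := by linarith
  have h4 := (div_le_iff₀ h1).mp h3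
  nlinarith [h4]

lemma aux_sum (c : ℝ) (hc : 0 ≤ c) (q : ℕ) (hq : 0 < q) (e : ℕ → ℝ)
    (hrec : ∀ n, q ≤ n → e n ≤ c + (1 / n) * ∑ u ∈ Finset.Ico q n, e u) :
    ∀ n, q ≤ n → ∑ u ∈ Finset.Ico q n, e u ≤ c * n * Real.log ((n:ℝ)/q) := by
  intro n hn
  induction n, hn using Nat.le_induction with
  | base =>
      have hq' : (q:ℝ) ≠ 0 := by positivity
      rw [div_self hq', Real.log_one]
      simp
  | succ n hn ih =>
    have hn1 : 1 ≤ n := hq.trans_le hn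
    have hn' : (0:ℝ) < n := by exact_mod_cast hn1
    have hq' : (0:ℝ) < q := by exact_mod_cast hq
    rw [Finset.sum_Ico_succ_top hn]
    have hen : e n ≤ c + Real.log ((n:ℝ)/q) * c := by
      have := hrec n hn
      have h2 : (1/(n:ℝ)) * ∑ u ∈ Finset.Ico q n, e u ≤
          (1/(n:ℝ)) * (c * n * Real.log ((n:ℝ)/q)) := by
        apply mul_le_mul_of_nonneg_left ih (by positivity)
      have h3 : (1/(n:ℝ)) * (c * n * Real.log ((n:ℝ)/q)) = Real.log ((n:ℝ)/q) * c := by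
        field_simp
      linarith [h2, h3 ▸ h2, this]
    have hsplit : Real.log (((n:ℝ)+1)/q) = Real.log ((n:ℝ)/q) + Real.log (((n:ℝ)+1)/n) := by
      rw [← Real.log_mul (by positivity) (by positivity)]
      congr 1; field_simp
    have hkey := aux_log n hn1
    have hck : c ≤ c * (((n:ℝ)+1) * Real.log (((n:ℝ)+1)/n)) := by
      nlinarith [hkey, hc]
    push_cast
    rw [hsplit]
    nlinarith [ih, hen, hck]

theorem stmt_0 (c : ℝ) (hc : 0 ≤ c) (q : ℕ) (hq : 0 < q) (e : ℕ → ℝ)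
    (hrec : ∀ n, q ≤ n → e n ≤ c + (1 / n) * ∑ u ∈ Finset.Ico q n, e u) :
    ∀ n, q ≤ n → e n ≤ c * Real.log (Real.exp 1 * n / q) := by
  intro n hn
  have hn' : (0:ℝ) < n := by exact_mod_cast hq.trans_le hn
  have hq' : (0:ℝ) < q := by exact_mod_cast hq
  have hsum := aux_sum c hc q hq e hrec n hn
  have h1 := hrec n hn
  have h2 : (1/(n:ℝ)) * ∑ u ∈ Finset.Ico q n, e u ≤ c * Real.log ((n:ℝ)/q) := by
    have := mul_le_mul_of_nonneg_left hsum (le_of_lt (by positivity : (0:ℝ) < 1/(n:ℝ)))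
    calc (1/(n:ℝ)) * ∑ u ∈ Finset.Ico q n, e u ≤ (1/(n:ℝ)) * (c * n * Real.log ((n:ℝ)/q)) := this
      _ = c * Real.log ((n:ℝ)/q) := by field_simp
  have hlog : Real.log (Real.exp 1 * n / q) = 1 + Real.log ((n:ℝ)/q) := by
    rw [mul_div_assoc, Real.log_mul (Real.exp_ne_zero 1) (by positivity), Real.log_exp]
  rw [hlog]
  linarith
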